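/- arXiv:1209.6158 — 2 statements merged into one kernel-verified Lean document; each statement's English description precedes it below -/
import Mathlib

section
/- The function HGP is monotone decreasing in its second argument: for every n : ℕ and all b c : ℕ → Bool with b ≤ c (pointwise, false < true), HGP n c ≤ HGP n b. That is, for any failure pattern, replacing failed requests by successful ones cannot increase the time complexity of the GP algorithm. -/
def tailSeq (b : ℕ → Bool) : ℕ → Bool := fun i => b (i+1)
def oddSeq (b : ℕ → Bool) : ℕ → Bool := fun i => b (2*i)
def evenSeq (b : ℕ → Bool) : ℕ → Bool := fun i => b (2*i+1)

/-- Time complexity of the GP algorithm with `n` uninformed processors under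
failure pattern `b` (`b i = true` means the `i`-th request is successful). -/
def HGP : ℕ → (ℕ → Bool) → ℕ
  | 0, _ => 0
  | n+1, b =>
    if b 0 then
      1 + max (HGP ((n+1)/2) (oddSeq (tailSeq b))) (HGP (n/2) (evenSeq (tailSeq b)))
    else
      1 + HGP n (tailSeq b)
decreasing_by all_goals omega

lemma tail_odd (t : ℕ → Bool) : tailSeq (oddSeq t) = evenSeq (tailSeq t) := by
  funext i; simp only [tailSeq, oddSeq, evenSeq]; congr 1

lemma even_eq_odd_tail (t : ℕ → Bool) : evenSeq t = oddSeq (tailSeq t) := by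
  funext i; rfl

lemma split_le (n : ℕ) : ∀ t : ℕ → Bool,
    HGP ((n+1)/2) (oddSeq t) ≤ HGP n t ∧ HGP (n/2) (evenSeq t) ≤ HGP n t := by
  induction n using Nat.strong_induction_on with
  | _ n ih =>
    intro t
    match n with
    | 0 => simp [HGP]
    | m+1 =>
      have hdiv : (m+1+1)/2 = m/2 + 1 := by omega
      constructor
      · rw [hdiv]
        cases ht : t 0 with
        | false =>
          rw [HGP, HGP]
          simp only [oddSeq, Nat.mul_zero, ht, if_false]
          rw [tail_odd]
          exact Nat.add_le_add_left ((ih m (by omega) (tailSeq t)).2) 1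
        | true =>
          rw [HGP, HGP]
          simp only [oddSeq, Nat.mul_zero, ht, if_true]
          rw [tail_odd]
          apply Nat.add_le_add_left
          apply le_trans (max_le ((ih (m/2) (by omega) (evenSeq (tailSeq t))).1)
            ((ih (m/2) (by omega) (evenSeq (tailSeq t))).2))
          exact le_max_right _ _
      · rw [even_eq_odd_tail]
        cases ht : t 0 with
        | false =>
          rw [HGP]
          simp only [ht, if_false]
          calc HGP ((m+1)/2) (oddSeq (tailSeq t)) ≤ HGP m (tailSeq t) :=
                (ih m (by omega) (tailSeq t)).1
            _ ≤ 1 + HGP m (tailSeq t) := Nat.le_add_left _ _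
        | true =>
          rw [HGP]
          simp only [ht, if_true]
          calc HGP ((m+1)/2) (oddSeq (tailSeq t))
              ≤ max (HGP ((m+1)/2) (oddSeq (tailSeq t))) (HGP (m/2) (evenSeq (tailSeq t))) :=
                le_max_left _ _
            _ ≤ 1 + _ := Nat.le_add_left _ _

/-- `HGP` is monotone decreasing in the failure pattern: replacing failed
requests by successful ones cannot increase the time complexity. -/
theorem hgp_antitone_pattern (n : ℕ) (b c : ℕ → Bool) (hbc : b ≤ c) :
    HGP n c ≤ HGP n b := by
  induction n using Nat.strong_induction_on generalizing b c with
  | _ n ih =>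
    match n with
    | 0 => simp [HGP]
    | m+1 =>
      have htb : tailSeq b ≤ tailSeq c := fun i => hbc (i+1)
      have hob : oddSeq (tailSeq b) ≤ oddSeq (tailSeq c) := fun i => htb (2*i)
      have heb : evenSeq (tailSeq b) ≤ evenSeq (tailSeq c) := fun i => htb (2*i+1)
      rw [HGP, HGP]
      cases hb : b 0 with
      | true =>
        have hc : c 0 = true := by
          have := hbc 0; rw [hb] at this; exact le_antisymm (by simp) this
        simp only [hb, hc, if_true]
        apply Nat.add_le_add_left
        exact max_le
          (le_trans (ih ((m+1)/2) (by omega) _ _ hob) (le_max_left _ _))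
          (le_trans (ih (m/2) (by omega) _ _ heb) (le_max_right _ _))
      | false =>
        cases hc : c 0 with
        | false =>
          simp only [hb, hc, Bool.false_eq_true, if_false]
          exact Nat.add_le_add_left (ih m (by omega) _ _ htb) 1
        | true =>
          simp only [hb, hc, Bool.false_eq_true, if_true, if_false]
          apply Nat.add_le_add_left
          apply le_trans (max_le
            (le_trans (ih ((m+1)/2) (by omega) _ _ hob) (le_max_left _ _))
            (le_trans (ih (m/2) (by omega) _ _ heb) (le_max_right _ _)))
          exact max_le (split_le m (tailSeq b)).1 (split_le m (tailSeq b)).2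
end

section
/- For any probability measure D on the space ℕ → Bool (with the product σ-algebra, Bool discrete), any n : ℕ and any H : ℕ, we have D {b | (HWU n b : ℕ∞) ≤ H} ≤ D {b | HGP n b ≤ H}. That is, if the failure pattern is sampled from any distribution D, then the probability that the GP execution finishes within H rounds is at least the probability that the WU execution finishes within H rounds. -/
/-- Time complexity of the WU (wakeup) algorithm with `n` uninformed processors
under failure pattern `b`, valued in the extended naturals. -/
noncomputable def HWU : ℕ → (ℕ → Bool) → ℕ∞
  | 0, _ => 0
  | n+1, b =>
    have : Decidable (∃ k, b k = true) := Classical.propDecidable _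
    if h : ∃ k, b k = true then
      ((Nat.find h + 1 : ℕ) : ℕ∞) +
        max (HWU ((n+1)/2) (oddSeq (fun i => b (i + Nat.find h + 1))))
            (HWU (n/2) (evenSeq (fun i => b (i + Nat.find h + 1))))
    else ⊤
decreasing_by all_goals omega

lemma hwu_false (m : ℕ) (b : ℕ → Bool) (hb : b 0 = false) :
    HWU (m+1) b = 1 + HWU (m+1) (tailSeq b) := by
  classical
  rw [HWU, HWU]
  by_cases h : ∃ k, b k = true
  · have hk0 : Nat.find h ≠ 0 := by
      intro h0
      have := Nat.find_spec h
      rw [h0, hb] at this; exact Bool.false_ne_true this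
    have h' : ∃ k, tailSeq b k = true := by
      obtain ⟨k, hk⟩ := h
      exact ⟨k - 1, by
        have : k ≠ 0 := by rintro rfl; rw [hb] at hk; exact Bool.false_ne_true hk
        simpa [tailSeq, Nat.sub_add_cancel (Nat.one_le_iff_ne_zero.2 this)] using hk⟩
    have hfind : Nat.find h' = Nat.find h - 1 := by
      apply le_antisymm
      · apply Nat.find_le
        show tailSeq b (Nat.find h - 1) = true
        have := Nat.find_spec h
        simpa [tailSeq, Nat.sub_add_cancel (Nat.one_le_iff_ne_zero.2 hk0)] using this
      · have : b (Nat.find h' + 1) = true := Nat.find_spec h'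
        have hle : Nat.find h ≤ Nat.find h' + 1 := Nat.find_le this
        omega
    simp only [dif_pos h, dif_pos h']
    have harg : (fun i => tailSeq b (i + Nat.find h' + 1)) =
        (fun i => b (i + Nat.find h + 1)) := by
      funext i
      rw [hfind]; simp only [tailSeq]
      congr 1
      omega
    rw [harg]
    have : ((Nat.find h + 1 : ℕ) : ℕ∞) = 1 + ((Nat.find h' + 1 : ℕ) : ℕ∞) := by
      have heq : Nat.find h + 1 = 1 + (Nat.find h' + 1) := by omega
      rw [heq, Nat.cast_add, Nat.cast_one]
    rw [this, add_assoc]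
  · have h' : ¬ ∃ k, tailSeq b k = true := by
      rintro ⟨k, hk⟩; exact h ⟨k + 1, hk⟩
    simp only [dif_neg h, dif_neg h']
    simp

lemma hgp_le_hwu (n : ℕ) : ∀ m b, n ≤ m → (HGP n b : ℕ∞) ≤ HWU m b := by
  induction n using Nat.strong_induction_on with
  | _ n ih =>
    intro m b hnm
    match n, m with
    | 0, m => simp [HGP]
    | n+1, m+1 =>
      classical
      cases hb : b 0 with
      | false =>
        rw [HGP, if_neg (by simp [hb]), hwu_false m b hb]
        push_cast
        refine add_le_add (le_refl _) ?_
        exact ih n (by omega) (m+1) (tailSeq b) (by omega)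
      | true =>
        have h : ∃ k, b k = true := ⟨0, hb⟩
        have hfind : Nat.find h = 0 := Nat.find_eq_zero h |>.2 hb
        rw [HGP, if_pos hb, HWU, dif_pos h, hfind]
        have harg : (fun i => b (i + 0 + 1)) = tailSeq b := by
          funext i; simp [tailSeq]
        rw [harg]
        push_cast
        rw [Nat.mono_cast.map_max]
        refine add_le_add (le_refl _) (max_le_max ?_ ?_)
        · exact ih ((n+1)/2) (by omega) ((m+1)/2) _ (by omega)
        · exact ih (n/2) (by omega) (m/2) _ (by omega)

open MeasureTheory

/-- For failure patterns sampled from any probability distribution `D`, the GP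
execution finishes within `H` rounds at least as likely as the WU execution. -/
theorem prob_hgp_fast_ge_prob_hwu_fast (D : Measure (ℕ → Bool))
    [IsProbabilityMeasure D] (n : ℕ) (H : ℕ) :
    D {b | HWU n b ≤ (H : ℕ∞)} ≤ D {b | HGP n b ≤ H} := by
  apply measure_mono
  intro b hb
  simp only [Set.mem_setOf_eq] at *
  have := hgp_le_hwu n n b le_rfl
  have h2 : (HGP n b : ℕ∞) ≤ (H : ℕ∞) := this.trans hb
  exact_mod_cast h2
end
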